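/- The normalized Canberra distance satisfies the triangle inequality: Δ(U,W) ≤ Δ(U,V) + Δ(V,W) for vectors U, V, W in ℝ^n with strictly positive entries. -/
import Mathlib

lemma canberra_key (a b c : ℝ) (ha : 0 < a) (hb : 0 < b) (hc : 0 < c) :
    |a - c| / (a + c) ≤ |a - b| / (a + b) + |b - c| / (b + c) := by
  have h1 : 0 < a + c := by linarith
  have h2 : 0 < a + b := by linarith
  have h3 : 0 < b + c := by linarith
  rw [div_add_div _ _ (ne_of_gt h2) (ne_of_gt h3), div_le_div_iff₀ h1 (by positivity)]
  rcases abs_cases (a - c) with ⟨e1, _⟩ | ⟨e1, _⟩ <;>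
    rcases abs_cases (a - b) with ⟨e2, _⟩ | ⟨e2, _⟩ <;>
    rcases abs_cases (b - c) with ⟨e3, _⟩ | ⟨e3, _⟩ <;>
    rw [e1, e2, e3] <;>
    nlinarith [mul_pos ha hb, mul_pos hb hc, mul_pos ha hc, sq_nonneg (a - b),
      sq_nonneg (b - c), sq_nonneg (a - c), mul_pos (mul_pos ha hb) hc]

theorem canberra_triangle (n : ℕ) (U V W : Fin n → ℝ)
    (hU : ∀ i, 0 < U i) (hV : ∀ i, 0 < V i) (hW : ∀ i, 0 < W i) :
    (1 / (n : ℝ)) * ∑ i, |U i - W i| / (|U i| + |W i|) ≤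
      (1 / (n : ℝ)) * ∑ i, |U i - V i| / (|U i| + |V i|) +
        (1 / (n : ℝ)) * ∑ i, |V i - W i| / (|V i| + |W i|) := by
  rw [← mul_add, ← Finset.sum_add_distrib]
  apply mul_le_mul_of_nonneg_left _ (by positivity)
  apply Finset.sum_le_sum
  intro i _
  rw [abs_of_pos (hU i), abs_of_pos (hV i), abs_of_pos (hW i)]
  exact canberra_key _ _ _ (hU i) (hV i) (hW i)
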